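/- Let Z₁ and Z₂ be independent random variables, each uniform on [-1/2, 1/2]. Then the product Z₁Z₂ is sub-Gaussian with variance proxy 1/2⁷, i.e., E[exp(s·Z₁Z₂)] ≤ exp(s²/2⁸) for all real s. -/

import Mathlib

open MeasureTheory ProbabilityTheory Real

/-- The uniform probability measure on the interval `[-1/2, 1/2]`. -/
noncomputable def unifHalf : Measure ℝ := volume.restrict (Set.Icc (-(1/2) : ℝ) (1/2))

lemma exp_tsum (u : ℝ) : Real.exp u = ∑' n : ℕ, u ^ n / n.factorial := by
  rw [Real.exp_eq_exp_ℝ, NormedSpace.exp_eq_tsum_div]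

instance : IsProbabilityMeasure unifHalf := by
  constructor
  rw [unifHalf, Measure.restrict_apply_univ, Real.volume_Icc]
  norm_num

lemma unifHalf_moment (n : ℕ) :
    ∫ x, x ^ n ∂unifHalf = ((1/2:ℝ)^(n+1) - (-(1/2):ℝ)^(n+1))/(n+1) := by
  rw [unifHalf, MeasureTheory.integral_Icc_eq_integral_Ioc,
    ← intervalIntegral.integral_of_le (by norm_num : (-(1/2):ℝ) ≤ 1/2),
    integral_pow]

lemma unifHalf_moment_odd (k : ℕ) :
    ∫ x, x ^ (2*k+1) ∂unifHalf = 0 := by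
  rw [unifHalf_moment]
  have h : (-(1/2):ℝ)^(2*k+1+1) = (1/2:ℝ)^(2*k+1+1) := Even.neg_pow ⟨k+1, by ring⟩ _
  rw [h]
  simp

lemma unifHalf_moment_even (k : ℕ) :
    ∫ x, x ^ (2*k) ∂unifHalf = (1/2:ℝ)^(2*k) / (2*k+1) := by
  rw [unifHalf_moment]
  have h : (-(1/2):ℝ)^(2*k+1) = -((1/2:ℝ)^(2*k+1)) := Odd.neg_pow ⟨k, by ring⟩ _
  rw [h]
  have h2 : ((1/2:ℝ)^(2*k+1) - -((1/2:ℝ)^(2*k+1))) = (1/2:ℝ)^(2*k) := by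
    rw [pow_succ]; ring
  rw [h2]
  push_cast
  ring

lemma unifHalf_moment_abs (n : ℕ) :
    |∫ x, x ^ n ∂unifHalf| ≤ (1/2:ℝ)^n := by
  rcases Nat.even_or_odd n with ⟨k, hk⟩ | ⟨k, hk⟩
  · have hn : n = 2*k := by omega
    subst hn
    rw [unifHalf_moment_even, abs_of_nonneg (by positivity)]
    exact div_le_self (by positivity) (by linarith [Nat.cast_nonneg (α := ℝ) k])
  · subst hk
    rw [unifHalf_moment_odd, abs_zero]
    positivity

lemma fact_key (k : ℕ) : k.factorial * 16 ^ k ≤ (2*k).factorial * (2*k+1)^2 := by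
  induction k with
  | zero => norm_num
  | succ k ih =>
    have h2 : 2*(k+1) = 2*k+1+1 := by ring
    rw [h2, Nat.factorial_succ, Nat.factorial_succ, Nat.factorial_succ]
    have step : (k+1) * 16 * (2*k+1)^2 ≤ (2*k+1+1) * ((2*k+1) * (2*k+1+1+1)^2) := by
      zify
      nlinarith [sq_nonneg (2*(k:ℤ)-1)]
    calc (k+1) * k.factorial * 16 ^ (k+1)
        = (k+1) * 16 * (k.factorial * 16 ^ k) := by ring
      _ ≤ (k+1) * 16 * ((2*k).factorial * (2*k+1)^2) := Nat.mul_le_mul_left _ ih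
      _ = ((k+1) * 16 * (2*k+1)^2) * (2*k).factorial := by ring
      _ ≤ ((2*k+1+1) * ((2*k+1) * (2*k+1+1+1)^2)) * (2*k).factorial :=
          Nat.mul_le_mul_right _ step
      _ = (2*k+1+1) * ((2*k+1+1+1)^2 * ((2*k+1) * (2*k).factorial)) := by ring
      _ = (2*k+1+1) * ((2*k+1) * (2*k).factorial) * (2*k+1+1+1)^2 := by ring

set_option maxHeartbeats 1600000 in
lemma key (s : ℝ) :
    ∫ p : ℝ × ℝ, Real.exp (s * (p.1 * p.2)) ∂(unifHalf.prod unifHalf)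
      ≤ Real.exp (s ^ 2 / 2 ^ 8) := by
  set μ := unifHalf.prod unifHalf with hμ
  set f : ℕ → ℝ × ℝ → ℝ := fun n p => (s * (p.1 * p.2)) ^ n / n.factorial with hf
  have hmeas : ∀ n, AEStronglyMeasurable (f n) μ := fun n =>
    (((continuous_const.mul (continuous_fst.mul continuous_snd)).pow n).div_const
      _).aestronglyMeasurable
  -- a.e. bound on each term
  have haebound : ∀ n, ∀ᵐ p : ℝ × ℝ ∂μ, ‖f n p‖ ≤ (|s|/4) ^ n / n.factorial := by
    intro n
    have hres : μ = (volume.prod volume).restrict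
        ((Set.Icc (-(1/2):ℝ) (1/2)) ×ˢ (Set.Icc (-(1/2):ℝ) (1/2))) := by
      rw [hμ, unifHalf, Measure.prod_restrict]
    rw [hres]
    filter_upwards [ae_restrict_mem (measurableSet_Icc.prod measurableSet_Icc)] with p hp
    obtain ⟨⟨h1a, h1b⟩, ⟨h2a, h2b⟩⟩ := hp
    have hx : |p.1| ≤ 1/2 := abs_le.mpr ⟨by linarith, h1b⟩
    have hy : |p.2| ≤ 1/2 := abs_le.mpr ⟨by linarith, h2b⟩
    have hbase : |s * (p.1 * p.2)| ≤ |s|/4 := by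
      rw [abs_mul, abs_mul]
      calc |s| * (|p.1| * |p.2|) ≤ |s| * ((1/2) * (1/2)) := by
            apply mul_le_mul_of_nonneg_left _ (abs_nonneg s)
            exact mul_le_mul hx hy (abs_nonneg _) (by norm_num)
        _ = |s|/4 := by ring
    show ‖(s * (p.1 * p.2)) ^ n / n.factorial‖ ≤ (|s|/4) ^ n / n.factorial
    rw [norm_div, norm_pow, Real.norm_eq_abs, Real.norm_eq_abs, Nat.abs_cast]
    gcongr

  have hsummable_bound : Summable (fun n : ℕ => (|s|/4) ^ n / n.factorial) :=
    Real.summable_pow_div_factorial _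
  -- interchange integral and sum
  have hinter : ∫ p, Real.exp (s * (p.1 * p.2)) ∂μ = ∑' n, ∫ p, f n p ∂μ := by
    have h1 : ∀ p : ℝ × ℝ, Real.exp (s * (p.1 * p.2)) = ∑' n, f n p := fun p => exp_tsum _
    simp_rw [h1]
    apply integral_tsum hmeas
    have hfin : ∀ n, ∫⁻ p, ‖f n p‖₊ ∂μ ≤ ENNReal.ofReal ((|s|/4) ^ n / n.factorial) := by
      intro n
      calc ∫⁻ p, (‖f n p‖₊ : ENNReal) ∂μ
          ≤ ∫⁻ _, ENNReal.ofReal ((|s|/4) ^ n / n.factorial) ∂μ := by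
            apply lintegral_mono_ae
            filter_upwards [haebound n] with p hp
            rw [← enorm_eq_nnnorm, ← ofReal_norm]
            exact ENNReal.ofReal_le_ofReal hp
        _ = ENNReal.ofReal ((|s|/4) ^ n / n.factorial) := by
            rw [lintegral_const, measure_univ, mul_one]
    apply ne_top_of_le_ne_top (ENNReal.ofReal_ne_top (r := Real.exp (|s|/4)))
    calc ∑' n, ∫⁻ p, (‖f n p‖₊ : ENNReal) ∂μ
        ≤ ∑' n, ENNReal.ofReal ((|s|/4) ^ n / n.factorial) := ENNReal.tsum_le_tsum hfin
      _ = ENNReal.ofReal (∑' n, (|s|/4) ^ n / n.factorial) :=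
          (ENNReal.ofReal_tsum_of_nonneg (fun n => by positivity) hsummable_bound).symm
      _ = ENNReal.ofReal (Real.exp (|s|/4)) := by rw [← exp_tsum]
  -- compute each integral
  have hint : ∀ n, ∫ p, f n p ∂μ
      = s ^ n / n.factorial * (∫ x, x ^ n ∂unifHalf) ^ 2 := by
    intro n
    have h1 : ∀ p : ℝ × ℝ, f n p = (s ^ n / n.factorial) * ((p.1 ^ n) * (p.2 ^ n)) := by
      intro p
      show (s * (p.1 * p.2)) ^ n / n.factorial = _
      rw [mul_pow, mul_pow]
      ring
    simp_rw [h1]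
    rw [integral_const_mul, hμ, integral_prod_mul (fun x : ℝ => x ^ n) (fun y : ℝ => y ^ n)]
    ring
  set c : ℕ → ℝ := fun n => s ^ n / n.factorial * (∫ x, x ^ n ∂unifHalf) ^ 2 with hc
  rw [hinter]
  simp_rw [hint]
  -- summability of c
  have hcnorm : ∀ n, ‖c n‖ ≤ (|s|/4) ^ n / n.factorial := by
    intro n
    show |s ^ n / n.factorial * (∫ x, x ^ n ∂unifHalf) ^ 2| ≤ _
    rw [abs_mul, abs_div, abs_pow, Nat.abs_cast, abs_pow]
    calc |s| ^ n / n.factorial * |∫ x, x ^ n ∂unifHalf| ^ 2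
        ≤ |s| ^ n / n.factorial * ((1/2:ℝ)^n) ^ 2 := by
          gcongr
          exact unifHalf_moment_abs n
      _ = (|s|/4) ^ n / n.factorial := by
          rw [show ((1/2:ℝ)^n)^2 = (1/4:ℝ)^n from by
              rw [← pow_mul, mul_comm, pow_mul]; norm_num,
            show (|s|/4:ℝ)^n = |s|^n * (1/4)^n from by
              rw [div_eq_mul_one_div, mul_pow]]
          ring
  have hsum_c : Summable c := Summable.of_norm_bounded hsummable_bound hcnorm
  have he : Summable (fun k => c (2*k)) :=
    hsum_c.comp_injective (fun a b h => by omega)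
  have ho : Summable (fun k => c (2*k+1)) :=
    hsum_c.comp_injective (fun a b h => by omega)
  have hodd : ∀ k, c (2*k+1) = 0 := by
    intro k
    show s ^ (2*k+1) / _ * (∫ x, x ^ (2*k+1) ∂unifHalf) ^ 2 = 0
    rw [unifHalf_moment_odd]
    ring
  have heven_le : ∀ k, c (2*k) ≤ (s^2/2^8) ^ k / k.factorial := by
    intro k
    have hcval : c (2*k) = (s^2)^k / (16^k * (2*k).factorial * (2*k+1)^2) := by
      show s ^ (2*k) / _ * (∫ x, x ^ (2*k) ∂unifHalf) ^ 2 = _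
      have h3 : (((1/2:ℝ)^(2*k)) / (2*k+1))^2 = (1/16:ℝ)^k / (2*k+1)^2 := by
        rw [div_pow, ← pow_mul, show 2*k*2 = 4*k from by ring,
          show (1/2:ℝ)^(4*k) = (1/16:ℝ)^k from by rw [pow_mul]; norm_num]
      rw [unifHalf_moment_even, h3, pow_mul]
      have h16 : ((1/16:ℝ))^k = ((16:ℝ)^k)⁻¹ := by rw [one_div, inv_pow]
      rw [div_mul_div_comm, h16, ← div_eq_mul_inv, div_div, mul_assoc]
    have hfact : ((256:ℝ))^k * k.factorial ≤ 16^k * (2*k).factorial * (2*k+1)^2 := by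
      have h := fact_key k
      have h' : (16:ℝ)^k * (k.factorial * 16^k) ≤ 16^k * ((2*k).factorial * (2*k+1)^2) := by
        have := (Nat.cast_le (α := ℝ)).mpr (Nat.mul_le_mul_left (16^k) h)
        push_cast at this
        convert this using 2 <;> push_cast <;> ring
      calc ((256:ℝ))^k * k.factorial = 16^k * (k.factorial * 16^k) := by
            rw [show (256:ℝ) = 16*16 by norm_num, mul_pow]; ring
        _ ≤ 16^k * ((2*k).factorial * (2*k+1)^2) := h'
        _ = 16^k * (2*k).factorial * (2*k+1)^2 := by ring
    have hrhs : ((s^2/2^8) ^ k / k.factorial : ℝ) = (s^2)^k / (256^k * k.factorial) := by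
      rw [div_pow, show ((2:ℝ)^8)^k = 256^k from by norm_num, div_div]
    rw [hcval, hrhs]
    have hpos : (0:ℝ) < 256^k * k.factorial := by positivity
    exact div_le_div_of_nonneg_left (by positivity) hpos hfact
  calc ∑' n, c n = (∑' k, c (2*k)) + ∑' k, c (2*k+1) := (tsum_even_add_odd he ho).symm
    _ = ∑' k, c (2*k) := by simp [hodd]
    _ ≤ ∑' k, (s^2/2^8) ^ k / k.factorial :=
        he.tsum_le_tsum heven_le (Real.summable_pow_div_factorial _)
    _ = Real.exp (s^2/2^8) := (exp_tsum _).symm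

theorem uniform_product_subGaussian {Ω : Type*} [MeasurableSpace Ω] (P : Measure Ω)
    [IsProbabilityMeasure P] (Z₁ Z₂ : Ω → ℝ)
    (hZ₁ : Measure.map Z₁ P = unifHalf) (hZ₂ : Measure.map Z₂ P = unifHalf)
    (hindep : IndepFun Z₁ Z₂ P) :
    ∀ s : ℝ, ∫ ω, Real.exp (s * (Z₁ ω * Z₂ ω)) ∂P ≤ Real.exp (s ^ 2 / 2 ^ 8) := by
  intro s
  have hne : (unifHalf : Measure ℝ) ≠ 0 := IsProbabilityMeasure.ne_zero _
  have hm1 : AEMeasurable Z₁ P := by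
    by_contra h
    rw [Measure.map_of_not_aemeasurable h] at hZ₁
    exact hne hZ₁.symm
  have hm2 : AEMeasurable Z₂ P := by
    by_contra h
    rw [Measure.map_of_not_aemeasurable h] at hZ₂
    exact hne hZ₂.symm
  have hmap : P.map (fun ω => (Z₁ ω, Z₂ ω)) = unifHalf.prod unifHalf := by
    rw [(indepFun_iff_map_prod_eq_prod_map_map hm1 hm2).mp hindep, hZ₁, hZ₂]
  have heq : ∫ ω, Real.exp (s * (Z₁ ω * Z₂ ω)) ∂P
      = ∫ p : ℝ × ℝ, Real.exp (s * (p.1 * p.2)) ∂(unifHalf.prod unifHalf) := by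
    rw [← hmap, integral_map (hm1.prodMk hm2)]
    exact (Real.continuous_exp.comp
      (continuous_const.mul (continuous_fst.mul continuous_snd))).aestronglyMeasurable
  rw [heq]
  exact key s
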